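/- Let G be a group, let A ⊆ G be a finite nonempty set with |A²| ≤ K|A|, and let k be a positive integer. Then there is a symmetric set S ⊆ A⁻¹A containing the identity such that S^k ⊆ A²·A⁻² and |S| ≥ exp(-9k²K log(2K))·|A|; moreover, every element of S^k has at least |A|³/(2K) representations as a₁a₂a₃⁻¹a₄⁻¹ with aᵢ ∈ A. -/

import Mathlib

open Finset Pointwise

set_option linter.unusedSectionVars false
namespace Stmt17

variable {G : Type*} [Group G] [DecidableEq G]

/-- indicator of the set `A⁻¹ * {v}` -/
def ind (A : Finset G) (v x : G) : ℝ := if x * v⁻¹ ∈ A⁻¹ then 1 else 0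

/-- `rho A = 1_{A⁻¹} * 1_{A⁻¹}` (convolution), counting representations `x = a⁻¹ b⁻¹`. -/
def rho (A : Finset G) (x : G) : ℝ :=
  (((A ×ˢ A).filter fun p => p.1⁻¹ * p.2⁻¹ = x).card : ℝ)

noncomputable def en (A : Finset G) : ℝ := ∑ᶠ x, rho A x ^ 2

noncomputable def Dd (A : Finset G) (t : G) : ℝ := ∑ᶠ x, (rho A (x * t) - rho A x) ^ 2

lemma ind_nonneg (A : Finset G) (v x : G) : 0 ≤ ind A v x := by
  unfold ind; split <;> norm_num

lemma ind_sq (A : Finset G) (v x : G) : ind A v x ^ 2 = ind A v x := by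
  unfold ind; split <;> norm_num

lemma rho_nonneg (A : Finset G) (x : G) : 0 ≤ rho A x := Nat.cast_nonneg _

lemma rho_support {A : Finset G} {x : G} (h : rho A x ≠ 0) : x ∈ A⁻¹ * A⁻¹ := by
  have : ((A ×ˢ A).filter fun p => p.1⁻¹ * p.2⁻¹ = x).Nonempty := by
    rw [Finset.nonempty_iff_ne_empty]
    intro he
    apply h
    simp [rho, he]
  obtain ⟨p, hp⟩ := this
  rw [Finset.mem_filter, Finset.mem_product] at hp
  exact hp.2 ▸ Finset.mul_mem_mul (Finset.inv_mem_inv hp.1.1) (Finset.inv_mem_inv hp.1.2)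

lemma finsum_eq_sum_aux (f : G → ℝ) (U : Finset G) (h : ∀ x, f x ≠ 0 → x ∈ U) :
    ∑ᶠ x, f x = ∑ x ∈ U, f x :=
  finsum_eq_sum_of_support_subset f (fun x hx => Finset.mem_coe.2 (h x hx))

lemma finsum_shift (f : G → ℝ) (t : G) : ∑ᶠ x, f (x * t) = ∑ᶠ x, f x :=
  finsum_comp_equiv (Equiv.mulRight t)

/-- `rho` as a sum of indicators of right translates of `A⁻¹`. -/
lemma sum_ind (A : Finset G) (x : G) : ∑ v ∈ A⁻¹, ind A v x = rho A x := by
  unfold ind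
  rw [Finset.sum_boole, rho]
  norm_num
  apply Finset.card_bij (fun v _ => ((x * v⁻¹)⁻¹, v⁻¹))
  · intro v hv
    rw [Finset.mem_filter] at hv
    rw [Finset.mem_filter, Finset.mem_product]
    refine ⟨⟨?_, ?_⟩, by group⟩
    · simpa using hv.2
    · simpa using hv.1
  · intro a ha b hb hab
    simpa using congrArg (fun p => p.2⁻¹) hab
  · intro p hp
    rw [Finset.mem_filter, Finset.mem_product] at hp
    refine ⟨p.2⁻¹, ?_, ?_⟩
    · rw [Finset.mem_filter]
      constructor
      · simpa using hp.1.2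
      · have h2 : p.2⁻¹ * x⁻¹ = p.1 := by
          rw [← hp.2]; group
        rw [h2]; exact hp.1.1
    · have : x * p.2 = p.1⁻¹ := by rw [← hp.2]; group
      simp [this]


/-- total mass of `rho` -/
lemma sum_rho (A : Finset G) : ∑ x ∈ A⁻¹ * A⁻¹, rho A x = (A.card : ℝ) ^ 2 := by
  have h := Finset.card_eq_sum_card_fiberwise
    (f := fun p : G × G => p.1⁻¹ * p.2⁻¹) (s := A ×ˢ A) (t := A⁻¹ * A⁻¹) ?_
  · have : ∑ x ∈ A⁻¹ * A⁻¹, rho A x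
        = ((∑ x ∈ A⁻¹ * A⁻¹, ((A ×ˢ A).filter fun p => p.1⁻¹ * p.2⁻¹ = x).card : ℕ) : ℝ) := by
      push_cast [rho]; rfl
    rw [this, ← h, Finset.card_product]
    push_cast; ring
  · intro p hp
    rw [Finset.mem_coe] at hp
    rw [Finset.mem_product] at hp
    exact Finset.mul_mem_mul (Finset.inv_mem_inv hp.1) (Finset.inv_mem_inv hp.2)

lemma en_eq (A : Finset G) : en A = ∑ x ∈ A⁻¹ * A⁻¹, rho A x ^ 2 := by
  apply finsum_eq_sum_aux
  intro x hx
  apply rho_support (x := x)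
  intro h; exact hx (by rw [h]; ring)

lemma en_nonneg (A : Finset G) : 0 ≤ en A := by
  rw [en_eq]; exact Finset.sum_nonneg fun _ _ => sq_nonneg _

/-- Energy lower bound via Cauchy-Schwarz. -/
lemma en_lower {A : Finset G} (hA : A.Nonempty) {K : ℝ}
    (hK : ((A * A).card : ℝ) ≤ K * A.card) : (A.card : ℝ) ^ 3 / K ≤ en A := by
  have hA0 : (0:ℝ) < A.card := by exact_mod_cast Finset.card_pos.2 hA
  have hAA : (0:ℝ) < (A*A).card := by
    exact_mod_cast Finset.card_pos.2 (hA.mul hA)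
  have hK0 : 0 < K := by
    have h1 : (0:ℝ) < K * A.card := lt_of_lt_of_le hAA hK
    by_contra hc
    push_neg at hc
    nlinarith
  have hQ : ((A⁻¹ * A⁻¹ : Finset G).card : ℝ) = ((A * A).card : ℝ) := by
    rw [← mul_inv_rev, Finset.card_inv]
  have hcs := Finset.sum_mul_sq_le_sq_mul_sq (A⁻¹ * A⁻¹) (fun _ => (1:ℝ)) (rho A)
  simp only [one_pow, one_mul, Finset.sum_const, nsmul_eq_mul, mul_one] at hcs
  rw [sum_rho] at hcs
  rw [← en_eq] at hcs
  -- hcs : (A.card^2)^2 ≤ (A⁻¹*A⁻¹).card * en A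
  rw [div_le_iff₀ hK0]
  have h2 : ((A.card:ℝ)^2)^2 ≤ (K * A.card) * en A := by
    calc ((A.card:ℝ)^2)^2 ≤ ((A⁻¹ * A⁻¹ : Finset G).card : ℝ) * en A := hcs
    _ ≤ (K * A.card) * en A := by
        apply mul_le_mul_of_nonneg_right _ (en_nonneg A)
        rw [hQ]; exact hK
  nlinarith [en_nonneg A, sq_nonneg ((A.card:ℝ))]

/-- helper: the count filter with swapped condition has cardinality `rho`. -/
lemma rho_swap (A : Finset G) (x : G) :
    (((A ×ˢ A).filter fun p => p.2⁻¹ * p.1⁻¹ = x).card : ℝ) = rho A x := by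
  rw [rho]
  norm_cast
  apply Finset.card_bij (fun p _ => p.swap)
  · intro p hp
    rw [Finset.mem_filter, Finset.mem_product] at hp ⊢
    exact ⟨⟨hp.1.2, hp.1.1⟩, hp.2⟩
  · intro a _ b _ hab
    have := congrArg Prod.swap hab
    simpa using this
  · intro p hp
    rw [Finset.mem_filter, Finset.mem_product] at hp
    exact ⟨p.swap, by rw [Finset.mem_filter, Finset.mem_product]; exact ⟨⟨hp.1.2, hp.1.1⟩, hp.2⟩,
      by simp⟩

/-- The representation count equals the autocorrelation of `rho`. -/
lemma cnt_eq (A : Finset G) (t : G) :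
    (((((A ×ˢ A) ×ˢ (A ×ˢ A)).filter
        fun q => q.1.1 * q.1.2 * q.2.1⁻¹ * q.2.2⁻¹ = t).card : ℝ))
      = ∑ x ∈ A⁻¹ * A⁻¹, rho A x * rho A (x * t) := by
  have h := Finset.card_eq_sum_card_fiberwise
    (f := fun q : (G × G) × (G × G) => q.1.2⁻¹ * q.1.1⁻¹)
    (s := ((A ×ˢ A) ×ˢ (A ×ˢ A)).filter fun q => q.1.1 * q.1.2 * q.2.1⁻¹ * q.2.2⁻¹ = t)
    (t := A⁻¹ * A⁻¹) ?_
  · rw [h]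
    push_cast
    apply Finset.sum_congr rfl
    intro x hx
    have key : ((((A ×ˢ A) ×ˢ (A ×ˢ A)).filter fun q => q.1.1 * q.1.2 * q.2.1⁻¹ * q.2.2⁻¹ = t).filter
          fun q => q.1.2⁻¹ * q.1.1⁻¹ = x)
        = ((A ×ˢ A).filter fun p => p.2⁻¹ * p.1⁻¹ = x) ×ˢ
          ((A ×ˢ A).filter fun p => p.1⁻¹ * p.2⁻¹ = x * t) := by
      ext q
      simp only [Finset.mem_filter, Finset.mem_product]
      constructor
      · rintro ⟨⟨⟨h1, h2⟩, h3⟩, h4⟩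
        refine ⟨⟨h1, h4⟩, h2, ?_⟩
        rw [← h4, ← h3]; group
      · rintro ⟨⟨h1, h4⟩, h2, h5⟩
        refine ⟨⟨⟨h1, h2⟩, ?_⟩, h4⟩
        have : q.2.1⁻¹ * q.2.2⁻¹ = (q.1.2⁻¹ * q.1.1⁻¹) * t := by rw [h4, h5]
        calc q.1.1 * q.1.2 * q.2.1⁻¹ * q.2.2⁻¹
            = q.1.1 * q.1.2 * (q.2.1⁻¹ * q.2.2⁻¹) := by group
          _ = q.1.1 * q.1.2 * (q.1.2⁻¹ * q.1.1⁻¹ * t) := by rw [this]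
          _ = t := by group
    rw [key, Finset.card_product]
    push_cast
    rw [rho_swap]
    rfl
  · intro q hq
    rw [Finset.mem_coe] at hq
    rw [Finset.mem_filter, Finset.mem_product, Finset.mem_product] at hq
    exact Finset.mul_mem_mul (Finset.inv_mem_inv hq.1.1.2) (Finset.inv_mem_inv hq.1.1.1)


lemma rho_eq_zero {A : Finset G} {x : G} (h : x ∉ A⁻¹ * A⁻¹) : rho A x = 0 := by
  by_contra hc; exact h (rho_support hc)

lemma rho_shift_support {A : Finset G} {x v : G} (h : rho A (x * v) ≠ 0) :
    x ∈ (A⁻¹ * A⁻¹) * {v⁻¹} := by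
  have h1 := rho_support h
  have : x = (x * v) * v⁻¹ := by group
  rw [this]
  exact Finset.mul_mem_mul h1 (Finset.mem_singleton_self _)

lemma Dd_nonneg (A : Finset G) (t : G) : 0 ≤ Dd A t :=
  finsum_nonneg fun _ => sq_nonneg _

lemma Dd_one (A : Finset G) : Dd A 1 = 0 := by
  unfold Dd
  have : ∀ x : G, (rho A (x * 1) - rho A x) ^ 2 = 0 := by
    intro x; rw [mul_one, sub_self]; ring
  rw [finsum_congr this, finsum_zero]

lemma Dd_inv (A : Finset G) (t : G) : Dd A t⁻¹ = Dd A t := by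
  unfold Dd
  rw [← finsum_shift (fun x => (rho A (x * t⁻¹) - rho A x) ^ 2) t]
  apply finsum_congr
  intro x
  have h1 : x * t * t⁻¹ = x := by group
  rw [h1]
  ring

/-- expansion of the `L²` difference norm -/
lemma Dd_eq (A : Finset G) (t : G) :
    Dd A t = 2 * en A - 2 * ∑ x ∈ A⁻¹ * A⁻¹, rho A x * rho A (x * t) := by
  classical
  set Q : Finset G := A⁻¹ * A⁻¹ with hQ
  set U : Finset G := Q ∪ Q * {t⁻¹} with hU
  have hsupp : ∀ x : G, (rho A (x * t) - rho A x) ^ 2 ≠ 0 → x ∈ U := by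
    intro x hx
    rcases eq_or_ne (rho A (x * t)) 0 with h1 | h1
    · rcases eq_or_ne (rho A x) 0 with h2 | h2
      · exact absurd (by rw [h1, h2]; ring) hx
      · exact Finset.mem_union_left _ (rho_support h2)
    · exact Finset.mem_union_right _ (rho_shift_support h1)
  have e1 : Dd A t = ∑ x ∈ U, (rho A (x * t) - rho A x) ^ 2 :=
    finsum_eq_sum_aux _ U hsupp
  have e2 : ∑ x ∈ U, (rho A (x * t) - rho A x) ^ 2
      = (∑ x ∈ U, rho A (x * t) ^ 2) - 2 * (∑ x ∈ U, rho A x * rho A (x * t))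
        + ∑ x ∈ U, rho A x ^ 2 := by
    rw [Finset.mul_sum, ← Finset.sum_sub_distrib, ← Finset.sum_add_distrib]
    apply Finset.sum_congr rfl
    intro x _
    ring
  have e3 : ∑ x ∈ U, rho A (x * t) ^ 2 = en A := by
    rw [← finsum_eq_sum_aux (fun x => rho A (x * t) ^ 2) U ?_]
    · exact finsum_shift (fun x => rho A x ^ 2) t
    · intro x hx
      apply Finset.mem_union_right
      apply rho_shift_support
      intro h; exact hx (by simp [h])
  have e4 : ∑ x ∈ U, rho A x ^ 2 = en A := by
    rw [← finsum_eq_sum_aux (fun x => rho A x ^ 2) U ?_, en]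
    intro x hx
    apply Finset.mem_union_left
    apply rho_support
    intro h; exact hx (by simp [h])
  have e5 : ∑ x ∈ U, rho A x * rho A (x * t) = ∑ x ∈ Q, rho A x * rho A (x * t) := by
    apply (Finset.sum_subset (Finset.subset_union_left) ?_).symm
    intro x _ hxq
    rw [rho_eq_zero hxq, zero_mul]
  rw [e1, e2, e3, e4, e5]
  ring

/-- Minkowski-type inequality for finitely supported functions. -/
lemma mink (f g : G → ℝ) (Uf Ug : Finset G)
    (hfU : ∀ x, f x ≠ 0 → x ∈ Uf) (hgU : ∀ x, g x ≠ 0 → x ∈ Ug)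
    {a b : ℝ} (ha : 0 ≤ a) (hb : 0 ≤ b)
    (hfa : ∑ᶠ x, f x ^ 2 ≤ a ^ 2) (hgb : ∑ᶠ x, g x ^ 2 ≤ b ^ 2) :
    ∑ᶠ x, (f x + g x) ^ 2 ≤ (a + b) ^ 2 := by
  classical
  set U : Finset G := Uf ∪ Ug with hU
  have hf' : ∑ x ∈ U, f x ^ 2 = ∑ᶠ x, f x ^ 2 := by
    rw [finsum_eq_sum_aux (fun x => f x ^ 2) U ?_]
    intro x hx
    exact Finset.mem_union_left _ (hfU x fun h => hx (by simp [h]))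
  have hg' : ∑ x ∈ U, g x ^ 2 = ∑ᶠ x, g x ^ 2 := by
    rw [finsum_eq_sum_aux (fun x => g x ^ 2) U ?_]
    intro x hx
    exact Finset.mem_union_right _ (hgU x fun h => hx (by simp [h]))
  have e1 : ∑ᶠ x, (f x + g x) ^ 2 = ∑ x ∈ U, (f x + g x) ^ 2 := by
    apply finsum_eq_sum_aux
    intro x hx
    rcases eq_or_ne (f x) 0 with h1 | h1
    · rcases eq_or_ne (g x) 0 with h2 | h2
      · exact absurd (by rw [h1, h2]; ring) hx
      · exact Finset.mem_union_right _ (hgU x h2)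
    · exact Finset.mem_union_left _ (hfU x h1)
  have hcs := Finset.sum_mul_sq_le_sq_mul_sq U f g
  have hf2 : (0:ℝ) ≤ ∑ x ∈ U, f x ^ 2 := Finset.sum_nonneg fun _ _ => sq_nonneg _
  have hg2 : (0:ℝ) ≤ ∑ x ∈ U, g x ^ 2 := Finset.sum_nonneg fun _ _ => sq_nonneg _
  have hfa' : ∑ x ∈ U, f x ^ 2 ≤ a ^ 2 := by rw [hf']; exact hfa
  have hgb' : ∑ x ∈ U, g x ^ 2 ≤ b ^ 2 := by rw [hg']; exact hgb
  have hfg : ∑ x ∈ U, f x * g x ≤ a * b := by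
    nlinarith [hcs, mul_nonneg ha hb]
  have e2 : ∑ x ∈ U, (f x + g x) ^ 2
      = (∑ x ∈ U, f x ^ 2) + 2 * (∑ x ∈ U, f x * g x) + ∑ x ∈ U, g x ^ 2 := by
    rw [Finset.mul_sum, ← Finset.sum_add_distrib, ← Finset.sum_add_distrib]
    apply Finset.sum_congr rfl
    intro x _
    ring
  rw [e1, e2]
  nlinarith

/-- triangle inequality for almost periods -/
lemma Dd_triangle (A : Finset G) (s t : G) {a b : ℝ} (ha : 0 ≤ a) (hb : 0 ≤ b)
    (hs : Dd A s ≤ a ^ 2) (ht : Dd A t ≤ b ^ 2) : Dd A (s * t) ≤ (a + b) ^ 2 := by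
  have key : ∑ᶠ x, ((rho A (x * s * t) - rho A (x * s)) + (rho A (x * s) - rho A x)) ^ 2
      ≤ (b + a) ^ 2 := by
    apply mink _ _ ((A⁻¹ * A⁻¹) * {t⁻¹ * s⁻¹} ∪ (A⁻¹ * A⁻¹) * {s⁻¹})
      ((A⁻¹ * A⁻¹) * {s⁻¹} ∪ (A⁻¹ * A⁻¹)) _ _ hb ha _ hs
    · intro x hx
      rcases eq_or_ne (rho A (x * s * t)) 0 with h1 | h1
      · rcases eq_or_ne (rho A (x * s)) 0 with h2 | h2
        · exact absurd (by rw [h1, h2]; ring) hx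
        · apply Finset.mem_union_right
          have := rho_shift_support h2
          exact this
      · apply Finset.mem_union_left
        have h3 : rho A (x * (s * t)) ≠ 0 := by rw [← mul_assoc]; exact h1
        have := rho_shift_support h3
        rw [mul_inv_rev] at this
        exact this
    · intro x hx
      rcases eq_or_ne (rho A (x * s)) 0 with h1 | h1
      · rcases eq_or_ne (rho A x) 0 with h2 | h2
        · exact absurd (by rw [h1, h2]; ring) hx
        · exact Finset.mem_union_right _ (rho_support h2)
      · exact Finset.mem_union_left _ (rho_shift_support h1)
    · -- ∑ᶠ x, (rho A (x*s*t) - rho A (x*s))^2 ≤ b^2 : shift by s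
      have : ∑ᶠ x, (rho A (x * s * t) - rho A (x * s)) ^ 2 = Dd A t := by
        exact finsum_shift (fun y => (rho A (y * t) - rho A y) ^ 2) s
      rw [this]; exact ht
  have : Dd A (s * t) = ∑ᶠ x,
      ((rho A (x * s * t) - rho A (x * s)) + (rho A (x * s) - rho A x)) ^ 2 := by
    unfold Dd
    apply finsum_congr
    intro x
    rw [← mul_assoc]
    ring
  rw [this]
  calc _ ≤ (b + a)^2 := key
  _ = (a + b)^2 := by ring


open Fintype in
lemma sumz_single (s : Finset G) {m : ℕ} (i : Fin m) (φ : G → ℝ) :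
    ∑ z ∈ Fintype.piFinset (fun _ : Fin m => s), φ (z i)
      = (s.card : ℝ) ^ (m - 1) * ∑ v ∈ s, φ v := by
  classical
  have h := Finset.prod_univ_sum (fun _ : Fin m => s) (fun j v => if j = i then φ v else 1)
  have hL : ∀ z : Fin m → G, (∏ j, if j = i then φ (z j) else 1) = φ (z i) := by
    intro z; simp
  have hR : ∀ j : Fin m, (∑ v ∈ s, if j = i then φ v else 1)
      = if j = i then ∑ v ∈ s, φ v else (s.card : ℝ) := by
    intro j; split_ifs <;> simp
  rw [funext hR] at h
  rw [← Finset.mul_prod_erase Finset.univ _ (Finset.mem_univ i)] at h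
  simp only [if_pos rfl] at h
  have hrest : (∏ j ∈ Finset.univ.erase i, if j = i then ∑ v ∈ s, φ v else (s.card : ℝ))
      = (s.card : ℝ) ^ (m - 1) := by
    rw [Finset.prod_congr rfl (fun j hj => if_neg (Finset.ne_of_mem_erase hj))]
    rw [Finset.prod_const, Finset.card_erase_of_mem (Finset.mem_univ i)]
    simp
  rw [hrest] at h
  calc ∑ z ∈ Fintype.piFinset (fun _ : Fin m => s), φ (z i)
      = ∑ z ∈ Fintype.piFinset (fun _ : Fin m => s), ∏ j, if j = i then φ (z j) else 1 := by
        exact Finset.sum_congr rfl fun z _ => (hL z).symm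
  _ = (∑ v ∈ s, φ v) * (s.card : ℝ) ^ (m - 1) := h.symm
  _ = _ := by ring

open Fintype in
lemma sumz_pair (s : Finset G) {m : ℕ} {i j : Fin m} (hij : j ≠ i) (φ ψ : G → ℝ) :
    ∑ z ∈ Fintype.piFinset (fun _ : Fin m => s), φ (z i) * ψ (z j)
      = (s.card : ℝ) ^ (m - 2) * ((∑ v ∈ s, φ v) * ∑ v ∈ s, ψ v) := by
  classical
  have h := Finset.prod_univ_sum (fun _ : Fin m => s)
    (fun l v => if l = i then φ v else if l = j then ψ v else 1)
  have hL : ∀ z : Fin m → G,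
      (∏ l, if l = i then φ (z l) else if l = j then ψ (z l) else 1)
        = φ (z i) * ψ (z j) := by
    intro z
    rw [← Finset.mul_prod_erase Finset.univ _ (Finset.mem_univ i), if_pos rfl]
    have hji : j ∈ Finset.univ.erase i := Finset.mem_erase.2 ⟨hij, Finset.mem_univ j⟩
    rw [← Finset.mul_prod_erase _ _ hji, if_neg hij, if_pos rfl]
    rw [Finset.prod_congr rfl (fun l hl => ?_), Finset.prod_const_one, mul_one]
    rw [Finset.mem_erase, Finset.mem_erase] at hl
    rw [if_neg hl.2.1, if_neg hl.1]
  have hR : ∀ l : Fin m, (∑ v ∈ s, if l = i then φ v else if l = j then ψ v else 1)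
      = if l = i then ∑ v ∈ s, φ v else if l = j then ∑ v ∈ s, ψ v else (s.card : ℝ) := by
    intro l; split_ifs <;> simp
  rw [funext hR] at h
  rw [← Finset.mul_prod_erase Finset.univ _ (Finset.mem_univ i), if_pos rfl] at h
  have hji : j ∈ Finset.univ.erase i := Finset.mem_erase.2 ⟨hij, Finset.mem_univ j⟩
  rw [← Finset.mul_prod_erase _ _ hji, if_neg hij, if_pos rfl] at h
  have hrest : (∏ l ∈ (Finset.univ.erase i).erase j,
      if l = i then ∑ v ∈ s, φ v else if l = j then ∑ v ∈ s, ψ v else (s.card : ℝ))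
      = (s.card : ℝ) ^ (m - 2) := by
    have hc : ∀ l ∈ (Finset.univ.erase i).erase j,
        (if l = i then ∑ v ∈ s, φ v else if l = j then ∑ v ∈ s, ψ v else (s.card : ℝ))
          = (s.card : ℝ) := by
      intro l hl
      rw [Finset.mem_erase, Finset.mem_erase] at hl
      rw [if_neg hl.2.1, if_neg hl.1]
    rw [Finset.prod_congr rfl hc, Finset.prod_const, Finset.card_erase_of_mem hji,
      Finset.card_erase_of_mem (Finset.mem_univ i), Finset.card_univ, Fintype.card_fin,
      Nat.sub_sub]
  rw [hrest] at h
  calc ∑ z ∈ Fintype.piFinset (fun _ : Fin m => s), φ (z i) * ψ (z j)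
      = ∑ z ∈ Fintype.piFinset (fun _ : Fin m => s),
          ∏ l, if l = i then φ (z l) else if l = j then ψ (z l) else 1 :=
        Finset.sum_congr rfl fun z _ => (hL z).symm
  _ = (∑ v ∈ s, φ v) * ((∑ v ∈ s, ψ v) * (s.card : ℝ) ^ (m - 2)) := h.symm
  _ = _ := by ring

lemma card_piFinset_const (s : Finset G) (m : ℕ) :
    ((Fintype.piFinset (fun _ : Fin m => s)).card : ℝ) = (s.card : ℝ) ^ m := by
  rw [Fintype.card_piFinset]
  push_cast
  simp

/-- second-moment / variance bound for sampling -/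
lemma varsum (s : Finset G) (m : ℕ) (hm : 1 ≤ m) (φ : G → ℝ)
    (hsq : ∀ v, φ v ^ 2 = φ v) (hpos : ∀ v, 0 ≤ φ v) :
    ∑ z ∈ Fintype.piFinset (fun _ : Fin m => s),
      ((s.card : ℝ) * (∑ i, φ (z i)) - m * ∑ v ∈ s, φ v) ^ 2
      ≤ m * (s.card : ℝ) ^ (m + 1) * ∑ v ∈ s, φ v := by
  classical
  set a : ℝ := (s.card : ℝ) with ha
  set P : ℝ := ∑ v ∈ s, φ v with hP
  have ha0 : 0 ≤ a := Nat.cast_nonneg _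
  have hP0 : 0 ≤ P := Finset.sum_nonneg fun v _ => hpos v
  set pi := Fintype.piFinset (fun _ : Fin m => s) with hpi
  have h1 : ∑ z ∈ pi, (∑ i, φ (z i)) = m * a ^ (m - 1) * P := by
    rw [Finset.sum_comm]
    rw [Finset.sum_congr rfl (fun i _ => sumz_single s i φ)]
    rw [Finset.sum_const]
    simp only [Finset.card_univ, Fintype.card_fin, nsmul_eq_mul]
    ring
  have h2 : ∑ z ∈ pi, (∑ i, φ (z i)) ^ 2
      = m * a ^ (m - 1) * P + (m : ℝ) * ((m : ℝ) - 1) * a ^ (m - 2) * P ^ 2 := by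
    have e1 : ∀ z : Fin m → G, (∑ i, φ (z i)) ^ 2 = ∑ i, ∑ j, φ (z i) * φ (z j) := by
      intro z
      rw [sq, Finset.sum_mul_sum]
    rw [Finset.sum_congr rfl fun z _ => e1 z]
    rw [Finset.sum_comm]
    have e2 : ∀ i : Fin m, ∑ z ∈ pi, ∑ j, φ (z i) * φ (z j)
        = a ^ (m - 1) * P + ((m : ℝ) - 1) * (a ^ (m - 2) * P ^ 2) := by
      intro i
      rw [Finset.sum_comm]
      have e3 : ∀ j : Fin m, ∑ z ∈ pi, φ (z i) * φ (z j)
          = if j = i then a ^ (m - 1) * P else a ^ (m - 2) * P ^ 2 := by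
        intro j
        split_ifs with hji
        · subst hji
          have hz : ∀ z : Fin m → G, φ (z j) * φ (z j) = (fun v => φ v ^ 2) (z j) := by
            intro z; ring
          rw [Finset.sum_congr rfl fun z _ => hz z]
          rw [sumz_single s j (fun v => φ v ^ 2)]
          rw [Finset.sum_congr rfl fun v _ => hsq v]
        · rw [sumz_pair s hji φ φ]
          ring
      rw [Finset.sum_congr rfl fun j _ => e3 j]
      rw [← Finset.add_sum_erase _ _ (Finset.mem_univ i), if_pos rfl]
      have hc : ∀ j ∈ Finset.univ.erase i,
          (if j = i then a ^ (m - 1) * P else a ^ (m - 2) * P ^ 2)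
            = a ^ (m - 2) * P ^ 2 := by
        intro j hj
        rw [if_neg (Finset.ne_of_mem_erase hj)]
      rw [Finset.sum_congr rfl hc, Finset.sum_const,
        Finset.card_erase_of_mem (Finset.mem_univ i), Finset.card_univ, Fintype.card_fin,
        nsmul_eq_mul]
      have hcast : ((m - 1 : ℕ) : ℝ) = (m : ℝ) - 1 := by
        push_cast [Nat.cast_sub hm]
        ring
      rw [hcast]
    rw [Finset.sum_congr rfl fun i _ => e2 i, Finset.sum_const]
    simp only [Finset.card_univ, Fintype.card_fin, nsmul_eq_mul]
    ring
  have expand : ∀ z : Fin m → G,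
      (a * (∑ i, φ (z i)) - (m : ℝ) * P) ^ 2
        = a ^ 2 * ((∑ i, φ (z i)) ^ 2) - (2 * a * ((m : ℝ) * P)) * (∑ i, φ (z i))
          + ((m : ℝ) * P) ^ 2 := by
    intro z; ring
  rw [Finset.sum_congr rfl fun z _ => expand z]
  rw [Finset.sum_add_distrib, Finset.sum_sub_distrib, ← Finset.mul_sum, ← Finset.mul_sum,
    Finset.sum_const, h1, h2, nsmul_eq_mul]
  have hNcard : ((pi.card : ℕ) : ℝ) = a ^ m := card_piFinset_const s m
  rw [hNcard]
  have hpowm : (0:ℝ) ≤ a ^ m := pow_nonneg ha0 m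
  obtain rfl | hm2 : m = 1 ∨ 2 ≤ m := by omega
  · norm_num
    nlinarith [hP0, ha0]
  · have f1 : a ^ 2 * a ^ (m - 1) = a ^ (m + 1) := by
      rw [← pow_add]; congr 1; omega
    have f2 : a ^ 2 * a ^ (m - 2) = a ^ m := by
      rw [← pow_add]; congr 1; omega
    have f3 : a * a ^ (m - 1) = a ^ m := by
      rw [← pow_succ']; congr 1; omega
    have key : a ^ 2 * ((m : ℝ) * a ^ (m - 1) * P
          + (m : ℝ) * ((m : ℝ) - 1) * a ^ (m - 2) * P ^ 2)
        - 2 * a * ((m : ℝ) * P) * ((m : ℝ) * a ^ (m - 1) * P) + a ^ m * ((m : ℝ) * P) ^ 2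
        = (m : ℝ) * a ^ (m + 1) * P - (m : ℝ) * a ^ m * P ^ 2 := by
      linear_combination ((m : ℝ) * P) * f1 + ((m : ℝ) * ((m : ℝ) - 1) * P ^ 2) * f2
        - (2 * (m : ℝ) ^ 2 * P ^ 2) * f3
    rw [key]
    nlinarith [mul_nonneg (mul_nonneg (Nat.cast_nonneg m : (0:ℝ) ≤ (m:ℝ)) hpowm) (sq_nonneg P)]


noncomputable def eff (A : Finset G) (m : ℕ) (w : Fin m → G) (x : G) : ℝ :=
  ∑ i, ind A (w i) x

noncomputable def dev (A : Finset G) (m : ℕ) (w : Fin m → G) (c : G) : ℝ :=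
  ∑ᶠ x, ((A.card : ℝ) * eff A m w x - m * rho A (x * c⁻¹)) ^ 2

lemma dev_nonneg (A : Finset G) (m : ℕ) (w : Fin m → G) (c : G) : 0 ≤ dev A m w c :=
  finsum_nonneg fun _ => sq_nonneg _

lemma ind_shift (A : Finset G) (v c x : G) : ind A (v * c) x = ind A v (x * c⁻¹) := by
  unfold ind
  rw [mul_inv_rev, ← mul_assoc]

lemma ind_support {A : Finset G} {v x : G} (h : ind A v x ≠ 0) : x * v⁻¹ ∈ A⁻¹ := by
  by_contra hc
  exact h (if_neg hc)

lemma dev_support {A : Finset G} {m : ℕ} {w : Fin m → G} {c : G}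
    (hw : ∀ i, w i * c⁻¹ ∈ A⁻¹) {x : G}
    (hx : (A.card : ℝ) * eff A m w x - (m : ℝ) * rho A (x * c⁻¹) ≠ 0) :
    x ∈ A⁻¹ * A⁻¹ * {c} := by
  rcases eq_or_ne (eff A m w x) 0 with h1 | h1
  · rcases eq_or_ne (rho A (x * c⁻¹)) 0 with h2 | h2
    · exact absurd (by rw [h1, h2]; ring) hx
    · have h3 := rho_support h2
      have : x = (x * c⁻¹) * c := by group
      rw [this]
      exact Finset.mul_mem_mul h3 (Finset.mem_singleton_self c)
  · obtain ⟨i, _, hi⟩ := Finset.exists_ne_zero_of_sum_ne_zero h1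
    have h4 : x * (w i)⁻¹ ∈ A⁻¹ := ind_support hi
    have : x = (x * (w i)⁻¹) * (w i * c⁻¹) * c := by group
    rw [this]
    exact Finset.mul_mem_mul (Finset.mul_mem_mul h4 (hw i)) (Finset.mem_singleton_self c)

lemma dev_eq (A : Finset G) (m : ℕ) (w : Fin m → G) (c : G)
    (hw : ∀ i, w i * c⁻¹ ∈ A⁻¹) :
    dev A m w c = ∑ x ∈ A⁻¹ * A⁻¹ * {c},
      ((A.card : ℝ) * eff A m w x - m * rho A (x * c⁻¹)) ^ 2 := by
  apply finsum_eq_sum_aux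
  intro x hx
  apply dev_support hw
  intro h0
  exact hx (by rw [h0]; ring)

lemma sum_mean (A : Finset G) (c : G) :
    ∑ x ∈ A⁻¹ * A⁻¹ * {c}, rho A (x * c⁻¹) = (A.card : ℝ) ^ 2 := by
  rw [← sum_rho A]
  apply Finset.sum_nbij' (i := fun x => x * c⁻¹) (j := fun y => y * c)
  · intro x hx
    obtain ⟨q, hq, u, hu, hqu⟩ := Finset.mem_mul.1 hx
    rw [Finset.mem_singleton] at hu
    subst hu
    have : q * u * u⁻¹ = q := by group
    rw [← hqu, this]
    exact hq
  · intro y hy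
    exact Finset.mul_mem_mul hy (Finset.mem_singleton_self c)
  · intro x _; group
  · intro y _; group
  · intro x _; rfl

lemma sampling (A : Finset G) (m : ℕ) (hm : 1 ≤ m) (c : G) :
    ∑ z ∈ Fintype.piFinset (fun _ : Fin m => A⁻¹), dev A m (fun i => z i * c) c
      ≤ (m : ℝ) * (A.card : ℝ) ^ (m + 3) := by
  classical
  set U : Finset G := A⁻¹ * A⁻¹ * {c} with hU
  set piF := Fintype.piFinset (fun _ : Fin m => A⁻¹) with hpiF
  have step1 : ∀ z ∈ piF, dev A m (fun i => z i * c) c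
      = ∑ x ∈ U, ((A.card : ℝ) * (∑ i, ind A (z i) (x * c⁻¹)) - m * rho A (x * c⁻¹)) ^ 2 := by
    intro z hz
    rw [dev_eq A m _ c (fun i => by
      have : z i ∈ A⁻¹ := Fintype.mem_piFinset.1 hz i
      simpa using this)]
    apply Finset.sum_congr rfl
    intro x _
    have : eff A m (fun i => z i * c) x = ∑ i, ind A (z i) (x * c⁻¹) := by
      unfold eff
      exact Finset.sum_congr rfl fun i _ => ind_shift A (z i) c x
    rw [this]
  rw [Finset.sum_congr rfl step1, Finset.sum_comm]
  have step2 : ∀ x ∈ U,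
      (∑ z ∈ piF, ((A.card : ℝ) * (∑ i, ind A (z i) (x * c⁻¹)) - m * rho A (x * c⁻¹)) ^ 2)
        ≤ (m : ℝ) * (A.card : ℝ) ^ (m + 1) * rho A (x * c⁻¹) := by
    intro x _
    have hv := varsum A⁻¹ m hm (fun v => ind A v (x * c⁻¹))
      (fun v => ind_sq A v (x * c⁻¹)) (fun v => ind_nonneg A v (x * c⁻¹))
    rw [sum_ind A (x * c⁻¹)] at hv
    rw [Finset.card_inv] at hv
    exact hv
  calc _ ≤ ∑ x ∈ U, (m : ℝ) * (A.card : ℝ) ^ (m + 1) * rho A (x * c⁻¹) :=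
        Finset.sum_le_sum step2
  _ = (m : ℝ) * (A.card : ℝ) ^ (m + 1) * ∑ x ∈ U, rho A (x * c⁻¹) := by
        rw [Finset.mul_sum]
  _ = (m : ℝ) * (A.card : ℝ) ^ (m + 1) * (A.card : ℝ) ^ 2 := by rw [hU, sum_mean]
  _ = (m : ℝ) * (A.card : ℝ) ^ (m + 3) := by
        rw [mul_assoc, ← pow_add]


open Classical in
noncomputable def goodSet (A : Finset G) (m : ℕ) (c : G) : Finset (Fin m → G) :=
  (Fintype.piFinset (fun _ : Fin m => A⁻¹)).filter
    (fun z => dev A m (fun i => z i * c) c ≤ 2 * m * (A.card : ℝ) ^ 3)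

open Classical in
noncomputable def TSet (A : Finset G) (m : ℕ) (w : Fin m → G) : Finset G :=
  (A⁻¹).filter (fun c => (∀ i, w i * c⁻¹ ∈ A⁻¹) ∧ dev A m w c ≤ 2 * m * (A.card : ℝ) ^ 3)

lemma mem_goodSet {A : Finset G} {m : ℕ} {c : G} {z : Fin m → G} :
    z ∈ goodSet A m c ↔ z ∈ Fintype.piFinset (fun _ : Fin m => A⁻¹)
      ∧ dev A m (fun i => z i * c) c ≤ 2 * m * (A.card : ℝ) ^ 3 := by
  unfold goodSet; exact Finset.mem_filter

lemma mem_TSet {A : Finset G} {m : ℕ} {w : Fin m → G} {c : G} :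
    c ∈ TSet A m w ↔ c ∈ A⁻¹ ∧ (∀ i, w i * c⁻¹ ∈ A⁻¹)
      ∧ dev A m w c ≤ 2 * m * (A.card : ℝ) ^ 3 := by
  unfold TSet
  rw [Finset.mem_filter]

/-- Markov: at least half of the sample tuples are good. -/
lemma good_lb (A : Finset G) (hA : A.Nonempty) (m : ℕ) (hm : 1 ≤ m) (c : G) :
    (A.card : ℝ) ^ m / 2 ≤ ((goodSet A m c).card : ℝ) := by
  classical
  unfold goodSet
  set piF := Fintype.piFinset (fun _ : Fin m => A⁻¹) with hpiF
  set thr : ℝ := 2 * m * (A.card : ℝ) ^ 3 with hthr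
  set P : (Fin m → G) → Prop := fun z => dev A m (fun i => z i * c) c ≤ thr with hP
  have hA0 : (0:ℝ) < A.card := by exact_mod_cast Finset.card_pos.2 hA
  have hm0 : (0:ℝ) < m := by exact_mod_cast hm
  have hthr0 : (0:ℝ) < thr := by rw [hthr]; positivity
  have hsum := sampling A m hm c
  have hbad : ((piF.filter (fun z => ¬ P z)).card : ℝ) * thr
      ≤ (m : ℝ) * (A.card : ℝ) ^ (m + 3) := by
    calc ((piF.filter (fun z => ¬ P z)).card : ℝ) * thr
        = ∑ _z ∈ piF.filter (fun z => ¬ P z), thr := by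
          rw [Finset.sum_const, nsmul_eq_mul]
    _ ≤ ∑ z ∈ piF.filter (fun z => ¬ P z), dev A m (fun i => z i * c) c := by
          apply Finset.sum_le_sum
          intro z hz
          have h2 := (Finset.mem_filter.1 hz).2
          rw [hP] at h2
          exact le_of_lt (lt_of_not_ge h2)
    _ ≤ ∑ z ∈ piF, dev A m (fun i => z i * c) c :=
          Finset.sum_le_sum_of_subset_of_nonneg (Finset.filter_subset _ _)
            (fun z _ _ => dev_nonneg A m _ c)
    _ ≤ (m : ℝ) * (A.card : ℝ) ^ (m + 3) := hsum
  have hNm : ((piF.card : ℕ) : ℝ) = (A.card : ℝ) ^ m := by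
    rw [hpiF, card_piFinset_const, Finset.card_inv]
  have hms : (m : ℝ) * (A.card : ℝ) ^ (m + 3) = ((A.card : ℝ) ^ m / 2) * thr := by
    rw [hthr, pow_add]; ring
  have hbad2 : ((piF.filter (fun z => ¬ P z)).card : ℝ) ≤ (A.card : ℝ) ^ m / 2 := by
    rw [hms] at hbad
    exact le_of_mul_le_mul_right hbad hthr0
  have hsplit := Finset.card_filter_add_card_filter_not (s := piF) (p := P)
  have hsplit' : ((piF.filter P).card : ℝ) + ((piF.filter (fun z => ¬ P z)).card : ℝ)
      = (A.card : ℝ) ^ m := by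
    rw [← hNm]
    exact_mod_cast congrArg Nat.cast hsplit
  have : (piF.filter P) = piF.filter (fun z => dev A m (fun i => z i * c) c ≤ thr) := rfl
  linarith [hsplit', hbad2]

/-- double counting: reindex good pairs by the product tuple. -/
lemma count_le (A : Finset G) (m : ℕ) :
    ∑ c ∈ A⁻¹, (goodSet A m c).card
      ≤ ∑ w ∈ Fintype.piFinset (fun _ : Fin m => A⁻¹ * A⁻¹), (TSet A m w).card := by
  classical
  set piF := Fintype.piFinset (fun _ : Fin m => A⁻¹) with hpiF
  set WW := Fintype.piFinset (fun _ : Fin m => A⁻¹ * A⁻¹) with hWW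
  set thr : ℝ := 2 * m * (A.card : ℝ) ^ 3 with hthr
  set P1 : Finset (G × (Fin m → G)) :=
    (A⁻¹ ×ˢ piF).filter (fun p => dev A m (fun i => p.2 i * p.1) p.1 ≤ thr) with hP1
  set P2 : Finset ((Fin m → G) × G) :=
    (WW ×ˢ A⁻¹).filter (fun p => (∀ i, p.1 i * p.2⁻¹ ∈ A⁻¹) ∧ dev A m p.1 p.2 ≤ thr) with hP2
  have h1 : ∑ c ∈ A⁻¹, (goodSet A m c).card = P1.card := by
    rw [Finset.card_eq_sum_card_fiberwise (f := Prod.fst) (t := A⁻¹) ?_]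
    · apply Finset.sum_congr rfl
      intro c hc
      apply Finset.card_bij (fun z _ => (c, z))
      · intro z hz
        rw [mem_goodSet] at hz
        rw [Finset.mem_filter, hP1, Finset.mem_filter, Finset.mem_product]
        exact ⟨⟨⟨hc, hz.1⟩, hz.2⟩, rfl⟩
      · intro z1 _ z2 _ h
        exact congrArg Prod.snd h
      · intro p hp
        rw [Finset.mem_filter, hP1, Finset.mem_filter, Finset.mem_product] at hp
        obtain ⟨⟨⟨hp1, hp2⟩, hp3⟩, hp4⟩ := hp
        refine ⟨p.2, ?_, ?_⟩
        · rw [mem_goodSet]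
          rw [hp4] at hp3
          exact ⟨hp2, hp3⟩
        · rw [← hp4]
    · intro p hp
      rw [Finset.mem_coe] at hp
      rw [hP1, Finset.mem_filter, Finset.mem_product] at hp
      exact hp.1.1
  have h2 : ∑ w ∈ WW, (TSet A m w).card = P2.card := by
    rw [Finset.card_eq_sum_card_fiberwise (f := Prod.fst) (t := WW) ?_]
    · apply Finset.sum_congr rfl
      intro w hw
      apply Finset.card_bij (fun c _ => (w, c))
      · intro c hcT
        rw [mem_TSet] at hcT
        rw [Finset.mem_filter, hP2, Finset.mem_filter, Finset.mem_product]
        exact ⟨⟨⟨hw, hcT.1⟩, hcT.2⟩, rfl⟩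
      · intro c1 _ c2 _ h
        exact congrArg Prod.snd h
      · intro p hp
        rw [Finset.mem_filter, hP2, Finset.mem_filter, Finset.mem_product] at hp
        obtain ⟨⟨⟨hp1, hp2⟩, hp3⟩, hp4⟩ := hp
        refine ⟨p.2, ?_, ?_⟩
        · rw [mem_TSet]
          rw [hp4] at hp3
          exact ⟨hp2, hp3.1, hp3.2⟩
        · rw [← hp4]
    · intro p hp
      rw [Finset.mem_coe] at hp
      rw [hP2, Finset.mem_filter, Finset.mem_product] at hp
      exact hp.1.1
  rw [h1, h2]
  apply Finset.card_le_card_of_injOn (fun p => ((fun i => p.2 i * p.1), p.1))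
  · intro p hp
    rw [Finset.mem_coe] at hp ⊢
    rw [hP1, Finset.mem_filter, Finset.mem_product] at hp
    obtain ⟨⟨hpc, hpz⟩, hpdev⟩ := hp
    rw [hP2, Finset.mem_filter, Finset.mem_product]
    refine ⟨⟨?_, hpc⟩, ?_, hpdev⟩
    · rw [hWW, Fintype.mem_piFinset]
      intro i
      exact Finset.mul_mem_mul (Fintype.mem_piFinset.1 hpz i) hpc
    · intro i
      have : p.2 i * p.1 * p.1⁻¹ = p.2 i := by group
      rw [this]
      exact Fintype.mem_piFinset.1 hpz i
  · intro p hp q hq h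
    have h1' : p.1 = q.1 := congrArg Prod.snd h
    have h2' : ∀ i, p.2 i * p.1 = q.2 i * q.1 := fun i => congrFun (congrArg Prod.fst h) i
    have h3' : p.2 = q.2 := by
      funext i
      have := h2' i
      rw [h1'] at this
      exact mul_right_cancel this
    exact Prod.ext h1' h3'

/-- two elements of `TSet` give an almost period. -/
lemma T_pair (A : Finset G) (hA : A.Nonempty) (m : ℕ) (hm : 1 ≤ m) (w : Fin m → G) {b c : G}
    (hb : b ∈ TSet A m w) (hc : c ∈ TSet A m w) :
    Dd A (b * c⁻¹) ≤ 8 * (A.card : ℝ) ^ 3 / m := by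
  classical
  rw [mem_TSet] at hb hc
  obtain ⟨hbA, hbw, hbdev⟩ := hb
  obtain ⟨hcA, hcw, hcdev⟩ := hc
  have hA0 : (0:ℝ) < A.card := by exact_mod_cast Finset.card_pos.2 hA
  have hm0 : (0:ℝ) < m := by exact_mod_cast hm
  set thr : ℝ := 2 * m * (A.card : ℝ) ^ 3 with hthr
  have hthr0 : (0:ℝ) ≤ thr := by rw [hthr]; positivity
  set a : ℝ := (A.card : ℝ) with ha
  set f : G → ℝ := fun x => (m : ℝ) * rho A (x * c⁻¹) - a * eff A m w x with hf
  set g : G → ℝ := fun x => a * eff A m w x - (m : ℝ) * rho A (x * b⁻¹) with hg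
  have hf2 : ∑ᶠ x, f x ^ 2 ≤ (Real.sqrt thr) ^ 2 := by
    have e : ∀ x, f x ^ 2 = (a * eff A m w x - (m : ℝ) * rho A (x * c⁻¹)) ^ 2 := by
      intro x; rw [hf]; ring
    rw [finsum_congr e, Real.sq_sqrt hthr0]
    exact hcdev
  have hg2 : ∑ᶠ x, g x ^ 2 ≤ (Real.sqrt thr) ^ 2 := by
    rw [Real.sq_sqrt hthr0]
    exact hbdev
  have hkey := mink f g (A⁻¹ * A⁻¹ * {c}) (A⁻¹ * A⁻¹ * {b}) ?_ ?_
    (Real.sqrt_nonneg thr) (Real.sqrt_nonneg thr) hf2 hg2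
  swap
  · intro x hx
    apply dev_support hcw
    intro h0
    apply hx
    rw [hf]
    rw [← ha] at h0
    linarith
  swap
  · intro x hx
    apply dev_support hbw
    intro h0
    apply hx
    rw [hg]
    rw [← ha] at h0
    linarith
  -- rewrite the LHS of hkey
  have e1 : ∀ x, (f x + g x) ^ 2
      = (m : ℝ) ^ 2 * ((rho A (x * c⁻¹) - rho A (x * b⁻¹)) ^ 2) := by
    intro x; rw [hf, hg]; ring
  have hfin : (Function.support fun x => (rho A (x * c⁻¹) - rho A (x * b⁻¹)) ^ 2).Finite := by
    apply Set.Finite.subset (Finset.finite_toSet ((A⁻¹ * A⁻¹ * {c}) ∪ (A⁻¹ * A⁻¹ * {b})))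
    intro x hx
    rw [Function.mem_support] at hx
    rcases eq_or_ne (rho A (x * c⁻¹)) 0 with h1 | h1
    · rcases eq_or_ne (rho A (x * b⁻¹)) 0 with h2 | h2
      · exact absurd (by rw [h1, h2]; ring) hx
      · apply Finset.mem_coe.2
        apply Finset.mem_union_right
        have h3 := rho_support h2
        have : x = (x * b⁻¹) * b := by group
        rw [this]
        exact Finset.mul_mem_mul h3 (Finset.mem_singleton_self b)
    · apply Finset.mem_coe.2
      apply Finset.mem_union_left
      have h3 := rho_support h1
      have : x = (x * c⁻¹) * c := by group
      rw [this]
      exact Finset.mul_mem_mul h3 (Finset.mem_singleton_self c)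
  have e2 : ∑ᶠ x, (f x + g x) ^ 2
      = (m : ℝ) ^ 2 * ∑ᶠ x, (rho A (x * c⁻¹) - rho A (x * b⁻¹)) ^ 2 := by
    rw [finsum_congr e1]
    exact (mul_finsum _ _).symm
  have e3 : ∑ᶠ x, (rho A (x * c⁻¹) - rho A (x * b⁻¹)) ^ 2 = Dd A (b * c⁻¹) := by
    unfold Dd
    rw [← finsum_shift (fun y => (rho A (y * (b * c⁻¹)) - rho A y) ^ 2) b⁻¹]
    apply finsum_congr
    intro x
    have h1 : x * b⁻¹ * (b * c⁻¹) = x * c⁻¹ := by group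
    rw [h1]
  rw [e2, e3] at hkey
  have hkey2 : (m : ℝ) ^ 2 * Dd A (b * c⁻¹) ≤ 4 * thr := by
    calc (m : ℝ) ^ 2 * Dd A (b * c⁻¹) ≤ (Real.sqrt thr + Real.sqrt thr) ^ 2 := hkey
    _ = 4 * (Real.sqrt thr) ^ 2 := by ring
    _ = 4 * thr := by rw [Real.sq_sqrt hthr0]
  rw [hthr] at hkey2
  rw [le_div_iff₀ hm0]
  nlinarith [hkey2, hm0]

end Stmt17


/-- If `|A²| ≤ K|A|` then there is a symmetric set `S ⊆ A⁻¹A` containing the identity with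
`S^k ⊆ A²·A⁻²` and `|S| ≥ exp(-9k²K log(2K))|A|`, and every element of `S^k` has at least
`|A|³/(2K)` representations as `a₁a₂a₃⁻¹a₄⁻¹` with `aᵢ ∈ A`. -/
theorem stmt17 {G : Type*} [Group G] [DecidableEq G] (A : Finset G) (hA : A.Nonempty)
    (K : ℝ) (hK : (((A * A).card : ℝ)) ≤ K * A.card) (k : ℕ) (hk : 1 ≤ k) :
    ∃ S : Finset G, S ⊆ A⁻¹ * A ∧ S⁻¹ = S ∧ (1 : G) ∈ S ∧
      (S ^ k : Finset G) ⊆ A * A * A⁻¹ * A⁻¹ ∧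
      Real.exp (-(9 * (k : ℝ) ^ 2 * K * Real.log (2 * K))) * A.card ≤ S.card ∧
      ∀ t ∈ S ^ k, (A.card : ℝ) ^ 3 / (2 * K) ≤
        (((((A ×ˢ A) ×ˢ (A ×ˢ A)).filter
          (fun q => q.1.1 * q.1.2 * q.2.1⁻¹ * q.2.2⁻¹ = t)).card : ℝ)) := by
  classical
  obtain ⟨a₀, ha₀⟩ := hA.exists_mem
  have hA0 : (0:ℝ) < A.card := by exact_mod_cast Finset.card_pos.2 hA
  have hK1 : (1:ℝ) ≤ K := by
    have h1 : (A.card : ℝ) ≤ ((A * A).card : ℝ) := by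
      exact_mod_cast Finset.card_le_card_mul_right hA
    nlinarith
  have hK0 : (0:ℝ) < K := by linarith
  have hk1 : (1:ℝ) ≤ (k:ℝ) := by exact_mod_cast hk
  have hk0 : (0:ℝ) < (k:ℝ) := by linarith
  set m : ℕ := ⌈8 * (k:ℝ)^2 * K⌉₊ with hm_def
  have hm_lb : 8 * (k:ℝ)^2 * K ≤ (m:ℝ) := Nat.le_ceil _
  have hm1 : 1 ≤ m := by
    have : (0:ℝ) < 8 * (k:ℝ)^2 * K := by positivity
    rw [hm_def]
    exact Nat.one_le_iff_ne_zero.2 (by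
      intro h0
      have := Nat.ceil_eq_zero.1 h0
      linarith)
  have hm0 : (0:ℝ) < (m:ℝ) := by exact_mod_cast hm1
  have hm_ub : (m:ℝ) ≤ 9 * (k:ℝ)^2 * K := by
    have h2 : ((m:ℕ):ℝ) < 8*(k:ℝ)^2*K + 1 := by
      rw [hm_def]
      exact Nat.ceil_lt_add_one (by positivity)
    nlinarith
  have hen := Stmt17.en_lower hA hK
  have hen0 := Stmt17.en_nonneg A
  set S : Finset G := (A⁻¹ * A).filter (fun t => Stmt17.Dd A t ≤ Stmt17.en A / (k:ℝ)^2)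
    with hS_def
  have hSsub : S ⊆ A⁻¹ * A := Finset.filter_subset _ _
  have hmemS : ∀ t : G, t ∈ S ↔ t ∈ A⁻¹ * A ∧ Stmt17.Dd A t ≤ Stmt17.en A / (k:ℝ)^2 :=
    fun t => Finset.mem_filter
  have hinvmem : ∀ t : G, t ∈ A⁻¹ * A → t⁻¹ ∈ A⁻¹ * A := by
    intro t h
    have h2 := Finset.inv_mem_inv h
    rwa [mul_inv_rev, inv_inv] at h2
  have hSinv : S⁻¹ = S := by
    ext t
    rw [Finset.mem_inv', hmemS, hmemS, Stmt17.Dd_inv]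
    constructor
    · rintro ⟨h1, h2⟩
      have h3 := hinvmem _ h1
      rw [inv_inv] at h3
      exact ⟨h3, h2⟩
    · rintro ⟨h1, h2⟩
      exact ⟨hinvmem _ h1, h2⟩
  have h1S : (1:G) ∈ S := by
    rw [hmemS]
    constructor
    · exact Finset.mem_mul.2 ⟨a₀⁻¹, Finset.inv_mem_inv ha₀, a₀, ha₀, inv_mul_cancel a₀⟩
    · rw [Stmt17.Dd_one]; positivity
  have hSk : ∀ n : ℕ, ∀ t ∈ S ^ n,
      Stmt17.Dd A t ≤ ((n:ℝ) * (Real.sqrt (Stmt17.en A) / k))^2 := by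
    intro n
    induction n with
    | zero =>
      intro t ht
      rw [pow_zero, Finset.mem_one] at ht
      subst ht
      rw [Stmt17.Dd_one]
      positivity
    | succ n ih =>
      intro t ht
      rw [pow_succ] at ht
      obtain ⟨u, hu, s, hs, rfl⟩ := Finset.mem_mul.1 ht
      have hDs : Stmt17.Dd A s ≤ (Real.sqrt (Stmt17.en A) / k)^2 := by
        rw [div_pow, Real.sq_sqrt hen0]
        exact ((hmemS s).1 hs).2
      have htr := Stmt17.Dd_triangle A u s (a := (n:ℝ) * (Real.sqrt (Stmt17.en A)/k))
        (b := Real.sqrt (Stmt17.en A)/k) (by positivity) (by positivity) (ih u hu) hDs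
      calc Stmt17.Dd A (u * s)
          ≤ ((n:ℝ) * (Real.sqrt (Stmt17.en A)/k) + Real.sqrt (Stmt17.en A)/k)^2 := htr
      _ = ((((n+1):ℕ):ℝ) * (Real.sqrt (Stmt17.en A)/k))^2 := by push_cast; ring
  have hSkDd : ∀ t ∈ S ^ k, Stmt17.Dd A t ≤ Stmt17.en A := by
    intro t ht
    have h1 := hSk k t ht
    have hke : (k:ℝ) * (Real.sqrt (Stmt17.en A)/k) = Real.sqrt (Stmt17.en A) := by
      field_simp
    rw [hke, Real.sq_sqrt hen0] at h1
    exact h1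
  have hcount : ∀ t ∈ S ^ k, (A.card:ℝ)^3/(2*K) ≤
      (((((A ×ˢ A) ×ˢ (A ×ˢ A)).filter
        (fun q => q.1.1 * q.1.2 * q.2.1⁻¹ * q.2.2⁻¹ = t)).card : ℝ)) := by
    intro t ht
    rw [Stmt17.cnt_eq]
    have hDd := hSkDd t ht
    have hDe := Stmt17.Dd_eq A t
    have h2 : (A.card:ℝ)^3/(2*K) = ((A.card:ℝ)^3/K)/2 := by
      rw [div_div]
      ring_nf
    rw [h2]
    linarith
  have hSkmem : (S^k : Finset G) ⊆ A * A * A⁻¹ * A⁻¹ := by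
    intro t ht
    have h1 := hcount t ht
    have h2 : (0:ℝ) < (A.card:ℝ)^3/(2*K) := by positivity
    have h3 : ((((A ×ˢ A) ×ˢ (A ×ˢ A)).filter
        (fun q => q.1.1 * q.1.2 * q.2.1⁻¹ * q.2.2⁻¹ = t)).Nonempty) := by
      rw [Finset.nonempty_iff_ne_empty]
      intro he
      rw [he] at h1
      simp only [Finset.card_empty, Nat.cast_zero] at h1
      linarith
    obtain ⟨qd, hq⟩ := h3
    rw [Finset.mem_filter, Finset.mem_product] at hq
    obtain ⟨⟨hqa, hqb⟩, heq⟩ := hq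
    rw [Finset.mem_product] at hqa hqb
    rw [← heq]
    exact Finset.mul_mem_mul (Finset.mul_mem_mul (Finset.mul_mem_mul hqa.1 hqa.2)
      (Finset.inv_mem_inv hqb.1)) (Finset.inv_mem_inv hqb.2)
  -- pigeonhole for the size bound
  have hgood : ∀ c : G, (A.card:ℝ)^m/2 ≤ ((Stmt17.goodSet A m c).card : ℝ) :=
    Stmt17.good_lb A hA m hm1
  have hcnt := Stmt17.count_le A m
  set WW := Fintype.piFinset (fun _ : Fin m => A⁻¹ * A⁻¹) with hWWdef
  have htot : (A.card:ℝ)^(m+1)/2 ≤ ∑ w ∈ WW, ((Stmt17.TSet A m w).card : ℝ) := by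
    have h1 : (A.card:ℝ) * ((A.card:ℝ)^m/2) ≤ ∑ c ∈ A⁻¹, ((Stmt17.goodSet A m c).card:ℝ) := by
      calc (A.card:ℝ) * ((A.card:ℝ)^m/2)
          = ∑ _c ∈ A⁻¹, ((A.card:ℝ)^m/2) := by
            rw [Finset.sum_const, nsmul_eq_mul, Finset.card_inv]
      _ ≤ ∑ c ∈ A⁻¹, ((Stmt17.goodSet A m c).card:ℝ) :=
            Finset.sum_le_sum (fun c _ => hgood c)
    have h2 : (∑ c ∈ A⁻¹, ((Stmt17.goodSet A m c).card:ℝ))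
        ≤ ∑ w ∈ WW, ((Stmt17.TSet A m w).card : ℝ) := by
      push_cast
      exact_mod_cast hcnt
    have h3 : (A.card:ℝ)^(m+1)/2 = (A.card:ℝ) * ((A.card:ℝ)^m/2) := by
      rw [pow_succ]
      ring
    rw [h3]
    linarith
  have hWWne : WW.Nonempty := by
    rw [hWWdef]
    apply Fintype.piFinset_nonempty.2
    intro _
    exact ⟨a₀⁻¹ * a₀⁻¹, Finset.mul_mem_mul (Finset.inv_mem_inv ha₀) (Finset.inv_mem_inv ha₀)⟩
  have hWWpos : (0:ℝ) < (WW.card:ℝ) := by exact_mod_cast Finset.card_pos.2 hWWne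
  obtain ⟨w₀, hw₀W, hw₀⟩ : ∃ w ∈ WW, (A.card:ℝ)^(m+1)/2 / (WW.card:ℝ)
      ≤ ((Stmt17.TSet A m w).card : ℝ) := by
    by_contra hcon
    push_neg at hcon
    have hlt := Finset.sum_lt_sum_of_nonempty hWWne hcon
    rw [Finset.sum_const, nsmul_eq_mul] at hlt
    have he : (WW.card:ℝ) * ((A.card:ℝ)^(m+1)/2 / (WW.card:ℝ)) = (A.card:ℝ)^(m+1)/2 := by
      field_simp
    rw [he] at hlt
    linarith
  have hQQcard : ((A⁻¹ * A⁻¹ : Finset G).card : ℝ) ≤ K * A.card := by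
    rw [← mul_inv_rev, Finset.card_inv]
    exact hK
  have hWWcard : (WW.card : ℝ) ≤ (K * A.card)^m := by
    rw [hWWdef, Stmt17.card_piFinset_const]
    exact pow_le_pow_left₀ (Nat.cast_nonneg _) hQQcard m
  have hq_lb : (A.card:ℝ)/(2*K^m) ≤ (A.card:ℝ)^(m+1)/2 / (WW.card:ℝ) := by
    rw [div_le_div_iff₀ (by positivity) hWWpos]
    calc (A.card:ℝ) * WW.card ≤ (A.card:ℝ) * (K * A.card)^m :=
          mul_le_mul_of_nonneg_left hWWcard hA0.le
    _ = (A.card:ℝ)^(m+1)/2 * (2*K^m) := by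
          rw [mul_pow, pow_succ]
          ring
  have hT_lb : (A.card:ℝ)/(2*K^m) ≤ ((Stmt17.TSet A m w₀).card : ℝ) :=
    le_trans hq_lb hw₀
  have hTne : (Stmt17.TSet A m w₀).Nonempty := by
    rw [← Finset.card_pos]
    have hpos : (0:ℝ) < ((Stmt17.TSet A m w₀).card:ℝ) :=
      lt_of_lt_of_le (by positivity) hT_lb
    exact_mod_cast hpos
  obtain ⟨c₀, hc₀⟩ := hTne
  have himg : (Stmt17.TSet A m w₀).image (fun b => b * c₀⁻¹) ⊆ S := by
    intro t ht
    obtain ⟨b, hbT, rfl⟩ := Finset.mem_image.1 ht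
    rw [hmemS]
    constructor
    · have hbA : b ∈ A⁻¹ := (Stmt17.mem_TSet.1 hbT).1
      have hcA : c₀ ∈ A⁻¹ := (Stmt17.mem_TSet.1 hc₀).1
      have hc' : c₀⁻¹ ∈ A := by
        have h5 := Finset.inv_mem_inv hcA
        rwa [inv_inv] at h5
      exact Finset.mul_mem_mul hbA hc'
    · have hDp := Stmt17.T_pair A hA m hm1 w₀ hbT hc₀
      refine le_trans hDp ?_
      rw [div_le_div_iff₀ hm0 (by positivity)]
      have h1 : (A.card:ℝ)^3/K * (8*(k:ℝ)^2*K) ≤ Stmt17.en A * m :=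
        mul_le_mul hen hm_lb (by positivity) hen0
      calc 8*(A.card:ℝ)^3 * (k:ℝ)^2 = (A.card:ℝ)^3/K * (8*(k:ℝ)^2*K) := by
            field_simp
      _ ≤ Stmt17.en A * m := h1
  have hScard : ((Stmt17.TSet A m w₀).card : ℝ) ≤ (S.card : ℝ) := by
    have h1 : ((Stmt17.TSet A m w₀).image (fun b => b * c₀⁻¹)).card
        = (Stmt17.TSet A m w₀).card :=
      Finset.card_image_of_injective _ (mul_left_injective c₀⁻¹)
    have h2 := Finset.card_le_card himg
    rw [h1] at h2
    exact_mod_cast h2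
  have hfinal : Real.exp (-(9 * (k:ℝ)^2 * K * Real.log (2*K))) * A.card
      ≤ (A.card:ℝ)/(2*K^m) := by
    have hlog0 : 0 ≤ Real.log (2*K) := Real.log_nonneg (by linarith)
    have hstep : 2*K^m ≤ Real.exp (9*(k:ℝ)^2*K*Real.log (2*K)) := by
      have e1 : (2:ℝ)*K^m ≤ (2*K)^m := by
        rw [mul_pow]
        apply mul_le_mul_of_nonneg_right ?_ (by positivity)
        calc (2:ℝ) = 2^1 := (pow_one 2).symm
        _ ≤ 2^m := pow_le_pow_right₀ one_le_two hm1
      have e2 : ((2*K):ℝ)^m = Real.exp ((m:ℝ) * Real.log (2*K)) := by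
        rw [← Real.log_pow, Real.exp_log (by positivity)]
      have e3 : Real.exp ((m:ℝ) * Real.log (2*K))
          ≤ Real.exp (9*(k:ℝ)^2*K*Real.log (2*K)) :=
        Real.exp_le_exp.2 (mul_le_mul_of_nonneg_right hm_ub hlog0)
      calc (2:ℝ)*K^m ≤ (2*K)^m := e1
      _ = Real.exp ((m:ℝ) * Real.log (2*K)) := e2
      _ ≤ _ := e3
    rw [Real.exp_neg]
    have h3 : (Real.exp (9*(k:ℝ)^2*K*Real.log (2*K)))⁻¹ ≤ (2*K^m)⁻¹ :=
      inv_anti₀ (by positivity) hstep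
    calc (Real.exp (9*(k:ℝ)^2*K*Real.log (2*K)))⁻¹ * (A.card:ℝ)
        ≤ (2*K^m)⁻¹ * A.card := mul_le_mul_of_nonneg_right h3 hA0.le
    _ = (A.card:ℝ)/(2*K^m) := by ring
  refine ⟨S, hSsub, hSinv, h1S, hSkmem, ?_, hcount⟩
  calc Real.exp (-(9 * (k:ℝ)^2 * K * Real.log (2*K))) * A.card
      ≤ (A.card:ℝ)/(2*K^m) := hfinal
  _ ≤ ((Stmt17.TSet A m w₀).card : ℝ) := hT_lb
  _ ≤ (S.card:ℝ) := hScard
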